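/- Let κ be a linearly ordered field, let f ∈ κ[X,Y], and suppose X^{2ℓ}·f = b_1^2 + ... + b_p^2 for some ℓ ≥ 0 and b_1,...,b_p ∈ κ[X,Y]. Then f itself is a sum of p squares in κ[X,Y]. -/

import Mathlib

open MvPolynomial

private lemma sum_sq_eq_zero_aux {κ : Type*} [Field κ] [LinearOrder κ] [IsStrictOrderedRing κ] {σ : Type*} {n : ℕ}
    (b : Fin n → MvPolynomial σ κ) (h : ∑ i, b i ^ 2 = 0) (i : Fin n) : b i = 0 := by
  apply MvPolynomial.funext
  intro x
  have hx : ∑ j, (eval x (b j)) ^ 2 = 0 := by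
    have := congrArg (eval x) h
    simpa using this
  have := (Finset.sum_eq_zero_iff_of_nonneg (fun j _ => sq_nonneg (eval x (b j)))).mp hx
    i (Finset.mem_univ i)
  simpa using (pow_eq_zero_iff two_ne_zero).mp this

/-- Let `κ` be a linearly ordered field, `f ∈ κ[X,Y]`, and suppose
`X^{2ℓ}·f = b₁² + ⋯ + b_p²` for some `ℓ ≥ 0` and `b₁,…,b_p ∈ κ[X,Y]`.
Then `f` is itself a sum of `p` squares in `κ[X,Y]`. -/
theorem stmt_15 {κ : Type*} [Field κ] [LinearOrder κ] [IsStrictOrderedRing κ]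
    (f : MvPolynomial (Fin 2) κ) (ℓ p : ℕ) (b : Fin p → MvPolynomial (Fin 2) κ)
    (h : (X 0 : MvPolynomial (Fin 2) κ) ^ (2 * ℓ) * f = ∑ i, b i ^ 2) :
    ∃ c : Fin p → MvPolynomial (Fin 2) κ, f = ∑ i, c i ^ 2 := by
  induction ℓ generalizing b with
  | zero =>
    exact ⟨b, by simpa using h⟩
  | succ ℓ ih =>
    set e := MvPolynomial.finSuccEquiv κ 1 with he
    have h1 : (Polynomial.X : Polynomial (MvPolynomial (Fin 1) κ)) ^ (2 * (ℓ + 1)) * e f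
        = ∑ i, (e (b i)) ^ 2 := by
      have := congrArg e h
      simpa [he, map_sum, finSuccEquiv_X_zero] using this
    -- evaluate at X = 0
    have h2 : ∑ i, (Polynomial.eval (0 : MvPolynomial (Fin 1) κ) (e (b i))) ^ 2 = 0 := by
      have := congrArg (Polynomial.eval (0 : MvPolynomial (Fin 1) κ)) h1
      simp only [Polynomial.eval_mul, Polynomial.eval_pow, Polynomial.eval_X,
        Polynomial.eval_finset_sum] at this
      rw [zero_pow (by omega), zero_mul] at this
      simpa using this.symm
    have hdvd : ∀ i, (Polynomial.X : Polynomial (MvPolynomial (Fin 1) κ)) ∣ e (b i) := by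
      intro i
      rw [Polynomial.X_dvd_iff, Polynomial.coeff_zero_eq_eval_zero]
      exact sum_sq_eq_zero_aux (fun j => Polynomial.eval 0 (e (b j))) h2 i
    choose c hc using hdvd
    have h3 : (Polynomial.X : Polynomial (MvPolynomial (Fin 1) κ)) ^ (2 * ℓ) * e f
        = ∑ i, c i ^ 2 := by
      have hX2 : (Polynomial.X : Polynomial (MvPolynomial (Fin 1) κ)) ^ 2 ≠ 0 :=
        pow_ne_zero _ Polynomial.X_ne_zero
      apply mul_left_cancel₀ hX2
      calc Polynomial.X ^ 2 * (Polynomial.X ^ (2 * ℓ) * e f)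
          = Polynomial.X ^ (2 * (ℓ + 1)) * e f := by ring_nf
        _ = ∑ i, (e (b i)) ^ 2 := h1
        _ = ∑ i, (Polynomial.X * c i) ^ 2 := by simp_rw [← hc]
        _ = Polynomial.X ^ 2 * ∑ i, c i ^ 2 := by rw [Finset.mul_sum]; exact Finset.sum_congr rfl (fun i _ => by ring)
    apply ih (fun i => e.symm (c i))
    apply e.injective
    have : e ((X 0 : MvPolynomial (Fin 2) κ) ^ (2 * ℓ) * f) = Polynomial.X ^ (2 * ℓ) * e f := by
      simp [he, map_mul, map_pow, finSuccEquiv_X_zero]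
    rw [this, h3, map_sum]
    simp [map_pow]
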